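/- Let p, q be coprime positive integers with q even, and b an integer. If q/2 and b have different parity (i.e., q/2 + b is odd), then the generalized quadratic Gauss sum G(p,b,q) = ∑_{r=0}^{q-1} e^{2πi(p r² + b r)/q} equals 0. -/

import Mathlib

open Complex

noncomputable def G (p : ℕ) (b : ℤ) (q : ℕ) : ℂ :=
  ∑ r ∈ Finset.range q,
    Complex.exp (2 * Real.pi * Complex.I * ((p * r ^ 2 + b * r : ℂ) / q))

/-- If `p, q` are coprime positive integers, `q` is even, and `q/2` and `b` have
different parity, then the generalized quadratic Gauss sum `G(p,b,q)` vanishes. -/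
theorem gauss_sum_even_diff_parity_eq_zero (p q : ℕ) (b : ℤ) (hp : 0 < p) (hq : 0 < q)
    (hcop : Nat.Coprime p q) (heven : Even q) (hpar : Odd ((q / 2 : ℤ) + b)) :
    G p b q = 0 := by
  obtain ⟨m, hm⟩ := heven
  have hq2 : q = 2 * m := by omega
  have hm0 : 0 < m := by omega
  -- p is odd
  have hpodd : Odd p := by
    rcases Nat.even_or_odd p with he | ho
    · exfalso
      have h2 : 2 ∣ Nat.gcd p q := Nat.dvd_gcd he.two_dvd ⟨m, hq2⟩
      rw [hcop] at h2; omega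
    · exact ho
  obtain ⟨a, ha⟩ := hpodd
  have hmq : (q / 2 : ℤ) = m := by omega
  rw [hmq] at hpar
  obtain ⟨c, hc⟩ := hpar
  have hmne : (m : ℂ) ≠ 0 := Nat.cast_ne_zero.mpr hm0.ne'
  unfold G
  rw [show Finset.range q = Finset.range (m + m) from by rw [hm], Finset.sum_range_add]
  have key : ∀ r ∈ Finset.range m,
      Complex.exp (2 * Real.pi * Complex.I * (((p : ℂ) * (m + r : ℕ) ^ 2 + b * (m + r : ℕ)) / q))
        = - Complex.exp (2 * Real.pi * Complex.I * (((p : ℂ) * r ^ 2 + b * r) / q)) := by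
    intro r _
    set k : ℤ := a * m + p * r + c with hk
    have hexp : (2 * (Real.pi : ℂ) * Complex.I) * (((p : ℂ) * (m + r : ℕ) ^ 2 + b * (m + r : ℕ)) / q)
        = (2 * (Real.pi : ℂ) * Complex.I) * (((p : ℂ) * r ^ 2 + b * r) / q)
          + ((2 * k + 1 : ℤ) : ℂ) * (Real.pi * Complex.I) := by
      have hqc : (q : ℂ) = 2 * m := by rw [hq2]; push_cast; ring
      have hpc : (p : ℂ) = 2 * a + 1 := by rw [ha]; push_cast; ring
      have hbc : (m : ℂ) + b = 2 * c + 1 := by exact_mod_cast hc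
      rw [hqc]
      push_cast [hk]
      field_simp
      ring_nf
      linear_combination (m : ℂ) * ((m : ℂ) * hpc + hbc)
    rw [hexp, Complex.exp_add]
    have hodd : Odd (2 * k + 1) := ⟨k, by ring⟩
    rw [Complex.exp_int_mul, Complex.exp_pi_mul_I, hodd.neg_one_zpow]
    ring
  rw [Finset.sum_congr rfl key, Finset.sum_neg_distrib]
  ring
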